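/- Let F ∈ ℂ[x,z,w], viewed inside the polynomial ring ℂ[x,y,z,w], and let λ ∈ ℂ be a primitive 5th root of unity. The ℂ-algebra automorphism of ℂ[x,y,z,w] sending y ↦ λy and fixing x, z, w preserves the ideal (xy⁵ − F) and hence descends to an automorphism σ of T := ℂ[x,y,z,w]/(xy⁵ − F). Then: (i) the subalgebra T^σ of σ-invariant elements is generated as a ℂ-algebra by the residue classes of x, y⁵, z, w; and (ii) the ℂ-algebra homomorphism ℂ[X,Z,W,U]/(XU − F(X,Z,W)) → T^σ sending X, Z, W, U to the residue classes of x, z, w, y⁵ respectively is a well-defined isomorphism. -/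

import Mathlib

/-!
STATEMENT 4: Let F ∈ ℂ[x,z,w] ⊂ ℂ[x,y,z,w] and λ a primitive 5th root of unity.
The automorphism of ℂ[x,y,z,w] sending y ↦ λy and fixing x,z,w preserves the
ideal (xy⁵ − F), hence descends to an automorphism σ of
T = ℂ[x,y,z,w]/(xy⁵ − F). Then (i) T^σ is generated as ℂ-algebra by the
classes of x, y⁵, z, w, and (ii) the map
ℂ[X,Z,W,U]/(XU − F(X,Z,W)) → T^σ, (X,Z,W,U) ↦ (x,z,w,y⁵), is a well-defined
isomorphism.
-/

open MvPolynomial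

noncomputable section

/-- `F(x,z,w)` viewed in `ℂ[x,y,z,w]` (variables `x,y,z,w` indexed `0,1,2,3`). -/
def Fxyzw (F₀ : MvPolynomial (Fin 3) ℂ) : MvPolynomial (Fin 4) ℂ :=
  rename ![0, 2, 3] F₀

/-- The principal ideal `(x·y⁵ − F)`. -/
def sexticIdeal (F₀ : MvPolynomial (Fin 3) ℂ) : Ideal (MvPolynomial (Fin 4) ℂ) :=
  Ideal.span {X 0 * X 1 ^ 5 - Fxyzw F₀}

/-- The ℂ-algebra endomorphism of `ℂ[x,y,z,w]` sending `y ↦ λy` and fixing `x,z,w`. -/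
def scaleY (lam : ℂ) : MvPolynomial (Fin 4) ℂ →ₐ[ℂ] MvPolynomial (Fin 4) ℂ :=
  aeval (fun i : Fin 4 => if i = 1 then C lam * X 1 else X i)

/-- The quotient ring `T = ℂ[x,y,z,w]/(xy⁵ − F)`. -/
abbrev Tq (F₀ : MvPolynomial (Fin 3) ℂ) : Type :=
  MvPolynomial (Fin 4) ℂ ⧸ sexticIdeal F₀

/-- The projection to the quotient. -/
def mkT (F₀ : MvPolynomial (Fin 3) ℂ) : MvPolynomial (Fin 4) ℂ →+* Tq F₀ :=
  Ideal.Quotient.mk (sexticIdeal F₀)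

/-- The ℂ-algebra map `ℂ[X,Z,W,U] → T`, sending `X,Z,W,U` to the residue classes
of `x,z,w,y⁵` (variables `X,Z,W,U` indexed `0,1,2,3`). -/
def ψT (F₀ : MvPolynomial (Fin 3) ℂ) : MvPolynomial (Fin 4) ℂ →ₐ[ℂ] Tq F₀ :=
  aeval ![mkT F₀ (X 0), mkT F₀ (X 2), mkT F₀ (X 3), mkT F₀ (X 1) ^ 5]

-- ===== auxiliary development =====
namespace DPaux

lemma scaleY_monomial (μ : ℂ) (s : Fin 4 →₀ ℕ) (a : ℂ) :
    scaleY μ (monomial s a) = C (μ ^ s 1) * monomial s a := by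
  rw [scaleY, aeval_monomial, Finsupp.prod_fintype _ _ (fun i => pow_zero _),
    Fin.prod_univ_four, monomial_eq, Finsupp.prod_fintype _ _ (fun i => pow_zero _),
    Fin.prod_univ_four]
  simp only [if_pos rfl, if_neg (by decide : (0:Fin 4) ≠ 1),
    if_neg (by decide : (2:Fin 4) ≠ 1), if_neg (by decide : (3:Fin 4) ≠ 1),
    eq_self_iff_true, if_true, algebraMap_eq, mul_pow, ← C_pow]
  ring

lemma coeff_scaleY (μ : ℂ) (p : MvPolynomial (Fin 4) ℂ) (s : Fin 4 →₀ ℕ) :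
    coeff s (scaleY μ p) = μ ^ s 1 * coeff s p := by
  induction p using MvPolynomial.induction_on' with
  | monomial u a =>
    rw [scaleY_monomial, coeff_C_mul, coeff_monomial]
    split_ifs with h
    · subst h; rfl
    · simp
  | add p q hp hq => rw [map_add, coeff_add, coeff_add, hp, hq]; ring

lemma scaleY_scaleY (a b : ℂ) (p : MvPolynomial (Fin 4) ℂ) :
    scaleY a (scaleY b p) = scaleY (a * b) p := by
  have h : (scaleY a).comp (scaleY b) = scaleY (a * b) := by
    apply algHom_ext
    intro i
    fin_cases i <;>
      simp [scaleY, C_mul] <;> ring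
  exact DFunLike.congr_fun h p

lemma scaleY_one (p : MvPolynomial (Fin 4) ℂ) : scaleY 1 p = p := by
  have h : scaleY (1:ℂ) = AlgHom.id ℂ _ := by
    apply algHom_ext
    intro i
    fin_cases i <;> simp [scaleY]
  rw [h]; rfl

lemma scaleY_Fxyzw (μ : ℂ) (F₀ : MvPolynomial (Fin 3) ℂ) :
    scaleY μ (Fxyzw F₀) = Fxyzw F₀ := by
  have h2 : (rename (![0,2,3] : Fin 3 → Fin 4)) F₀ = aeval (X ∘ ![0, 2, 3]) F₀ := by
    rw [← aeval_X_left_apply ((rename (![0,2,3] : Fin 3 → Fin 4)) F₀), aeval_rename]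
  have h3 : ((fun i : Fin 4 => if i = 1 then C μ * X 1 else X i) ∘ ![0, 2, 3]) =
      (X ∘ ![0, 2, 3] : Fin 3 → MvPolynomial (Fin 4) ℂ) := by
    funext i; fin_cases i <;> simp
  rw [Fxyzw, scaleY, aeval_rename, h3, h2]

lemma scaleY_g (F₀ : MvPolynomial (Fin 3) ℂ) (μ : ℂ) (hμ : μ ^ 5 = 1) :
    scaleY μ (X 0 * X 1 ^ 5 - Fxyzw F₀) = X 0 * X 1 ^ 5 - Fxyzw F₀ := by
  rw [map_sub, map_mul, map_pow, scaleY_Fxyzw]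
  rw [show scaleY μ (X 0) = X 0 by simp [scaleY]]
  rw [show scaleY μ (X 1) = C μ * X 1 by simp [scaleY]]
  rw [mul_pow, ← C_pow, hμ, C_1, one_mul]


def φm : MvPolynomial (Fin 4) ℂ →ₐ[ℂ] MvPolynomial (Fin 4) ℂ :=
  aeval ![X 0, X 2, X 3, X 1 ^ 5]

def tmap (s : Fin 4 →₀ ℕ) : Fin 4 →₀ ℕ :=
  Finsupp.single 0 (s 0) + Finsupp.single 1 (5 * s 3) +
    Finsupp.single 2 (s 1) + Finsupp.single 3 (s 2)

lemma tmap_apply0 (s : Fin 4 →₀ ℕ) : tmap s 0 = s 0 := by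
  simp [tmap, Finsupp.single_apply]
lemma tmap_apply1 (s : Fin 4 →₀ ℕ) : tmap s 1 = 5 * s 3 := by
  simp [tmap, Finsupp.single_apply]
lemma tmap_apply2 (s : Fin 4 →₀ ℕ) : tmap s 2 = s 1 := by
  simp [tmap, Finsupp.single_apply]
lemma tmap_apply3 (s : Fin 4 →₀ ℕ) : tmap s 3 = s 2 := by
  simp [tmap, Finsupp.single_apply]

lemma tmap_inj : Function.Injective tmap := by
  intro s u h
  ext i
  have h0 := congrArg (fun f => f (0:Fin 4)) h
  have h1 := congrArg (fun f => f (1:Fin 4)) h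
  have h2 := congrArg (fun f => f (2:Fin 4)) h
  have h3 := congrArg (fun f => f (3:Fin 4)) h
  simp only [tmap_apply0, tmap_apply1, tmap_apply2, tmap_apply3] at h0 h1 h2 h3
  have h1' : s 3 = u 3 := by omega
  fin_cases i
  exacts [h0, h2, h3, h1']

lemma φm_monomial (s : Fin 4 →₀ ℕ) (a : ℂ) :
    φm (monomial s a) = monomial (tmap s) a := by
  rw [φm, aeval_monomial, Finsupp.prod_fintype _ _ (fun i => pow_zero _),
    Fin.prod_univ_four, monomial_eq, Finsupp.prod_fintype _ _ (fun i => pow_zero _),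
    Fin.prod_univ_four, tmap_apply0, tmap_apply1, tmap_apply2, tmap_apply3]
  simp only [Matrix.cons_val_zero, Matrix.cons_val_one, Matrix.head_cons, algebraMap_eq,
    Matrix.cons_val_two, Matrix.tail_cons, Matrix.cons_val_three, pow_mul]
  ring

lemma coeff_φm (p : MvPolynomial (Fin 4) ℂ) (u : Fin 4 →₀ ℕ) :
    coeff (tmap u) (φm p) = coeff u p := by
  conv_lhs => rw [p.as_sum]
  rw [map_sum, coeff_sum]
  simp only [φm_monomial, coeff_monomial]
  have he : ∀ s ∈ p.support, (if tmap s = tmap u then coeff s p else 0) =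
      (if s = u then coeff s p else 0) := by
    intro s _
    congr 1
    exact propext ⟨fun h => tmap_inj h, fun h => by rw [h]⟩
  rw [Finset.sum_congr rfl he, Finset.sum_ite_eq' p.support u (fun s => coeff s p)]
  split_ifs with h
  · rfl
  · exact (MvPolynomial.notMem_support_iff.mp h).symm

lemma φm_inj : Function.Injective φm := by
  intro p q h
  apply MvPolynomial.ext
  intro u
  rw [← coeff_φm p u, ← coeff_φm q u, h]

def tinv (s : Fin 4 →₀ ℕ) : Fin 4 →₀ ℕ :=
  Finsupp.single 0 (s 0) + Finsupp.single 1 (s 2) +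
    Finsupp.single 2 (s 3) + Finsupp.single 3 (s 1 / 5)

lemma tmap_tinv (s : Fin 4 →₀ ℕ) (h : 5 ∣ s 1) : tmap (tinv s) = s := by
  have h5 : 5 * (s 1 / 5) = s 1 := Nat.mul_div_cancel' h
  ext i
  fin_cases i <;>
    simp [tmap_apply0, tmap_apply1, tmap_apply2, tmap_apply3, tinv,
      Finsupp.single_apply, h5]

lemma φm_range (q : MvPolynomial (Fin 4) ℂ) (hq : ∀ s ∈ q.support, 5 ∣ s 1) :
    ∃ p, φm p = q := by
  refine ⟨∑ s ∈ q.support, monomial (tinv s) (coeff s q), ?_⟩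
  rw [map_sum]
  conv_rhs => rw [q.as_sum]
  refine Finset.sum_congr rfl fun s hs => ?_
  rw [φm_monomial, tmap_tinv s (hq s hs)]


lemma φm_G (F₀ : MvPolynomial (Fin 3) ℂ) :
    φm (X 0 * X 3 - rename Fin.castSucc F₀) = X 0 * X 1 ^ 5 - Fxyzw F₀ := by
  have h2 : (rename (![0,2,3] : Fin 3 → Fin 4)) F₀ = aeval (X ∘ ![0, 2, 3]) F₀ := by
    rw [← aeval_X_left_apply ((rename (![0,2,3] : Fin 3 → Fin 4)) F₀), aeval_rename]
  have h3 : ((![X 0, X 2, X 3, X 1 ^ 5] : Fin 4 → MvPolynomial (Fin 4) ℂ) ∘ Fin.castSucc) =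
      (X ∘ ![0, 2, 3] : Fin 3 → MvPolynomial (Fin 4) ℂ) := by
    funext i; fin_cases i <;> rfl
  rw [φm, map_sub, map_mul, aeval_rename, h3, Fxyzw, h2]
  simp

lemma ψ_eq (F₀ : MvPolynomial (Fin 3) ℂ) :
    ψT F₀ = (Ideal.Quotient.mkₐ ℂ (sexticIdeal F₀)).comp φm := by
  apply algHom_ext
  intro i
  fin_cases i <;>
    simp [ψT, φm, mkT, Ideal.Quotient.mkₐ_eq_mk]

lemma scaleY_φm (μ : ℂ) (hμ : μ ^ 5 = 1) (p : MvPolynomial (Fin 4) ℂ) :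
    scaleY μ (φm p) = φm p := by
  have h : (scaleY μ).comp φm = φm := by
    apply algHom_ext
    intro i
    fin_cases i
    · simp [scaleY, φm]
    · simp [scaleY, φm]
    · simp [scaleY, φm]
    · show scaleY μ (φm (X 3)) = φm (X 3)
      rw [show φm (X 3) = X 1 ^ 5 by simp [φm]]
      rw [map_pow, show scaleY μ (X 1) = C μ * X 1 by simp [scaleY],
        mul_pow, ← C_pow, hμ, C_1, one_mul]
  exact DFunLike.congr_fun h p

def Av (lam : ℂ) (p : MvPolynomial (Fin 4) ℂ) : MvPolynomial (Fin 4) ℂ :=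
  (5 : ℂ)⁻¹ • ∑ k ∈ Finset.range 5, scaleY (lam ^ k) p

lemma Av_support {lam : ℂ} (hlam : IsPrimitiveRoot lam 5) (p : MvPolynomial (Fin 4) ℂ) :
    ∀ s ∈ (Av lam p).support, 5 ∣ s 1 := by
  intro s hs
  by_contra hd
  apply MvPolynomial.mem_support_iff.mp hs
  rw [Av, coeff_smul, coeff_sum]
  simp only [coeff_scaleY]
  have he : ∀ k ∈ Finset.range 5, (lam ^ k) ^ s 1 * coeff s p
      = (lam ^ s 1) ^ k * coeff s p := by
    intro k _; rw [pow_right_comm]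
  rw [Finset.sum_congr rfl he, ← Finset.sum_mul]
  have h1 : lam ^ s 1 ≠ 1 := fun h => hd ((hlam.pow_eq_one_iff_dvd _).mp h)
  have h5 : (lam ^ s 1) ^ 5 = 1 := by
    rw [pow_right_comm, hlam.pow_eq_one, one_pow]
  rw [geom_sum_eq h1 5, h5, sub_self, zero_div, zero_mul, smul_zero]

end DPaux

open DPaux Finset in
theorem quotient_of_degree_one_del_pezzo_by_order_five
    (F₀ : MvPolynomial (Fin 3) ℂ) (lam : ℂ) (hlam : IsPrimitiveRoot lam 5) :
    -- the automorphism y ↦ λy preserves the ideal (xy⁵ − F) ...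
    Ideal.map (scaleY lam) (sexticIdeal F₀) = sexticIdeal F₀ ∧
    -- ... hence descends to an automorphism σ of T ...
    ∃ σ : Tq F₀ ≃ₐ[ℂ] Tq F₀,
      (∀ r : MvPolynomial (Fin 4) ℂ, σ (mkT F₀ r) = mkT F₀ (scaleY lam r)) ∧
      ∀ τ : Tq F₀ ≃ₐ[ℂ] Tq F₀,
        (∀ r : MvPolynomial (Fin 4) ℂ, τ (mkT F₀ r) = mkT F₀ (scaleY lam r)) →
        -- (i)  T^σ is generated by the classes of x, y⁵, z, w:
        (AlgHom.equalizer (τ : Tq F₀ →ₐ[ℂ] Tq F₀) (AlgHom.id ℂ (Tq F₀)) =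
          Algebra.adjoin ℂ
            {mkT F₀ (X 0), mkT F₀ (X 1) ^ 5, mkT F₀ (X 2), mkT F₀ (X 3)}) ∧
        -- (ii) ℂ[X,Z,W,U]/(XU − F(X,Z,W)) ≅ T^σ via (X,Z,W,U) ↦ (x,z,w,y⁵):
        -- the map ℂ[X,Z,W,U] → T has image exactly T^σ and kernel exactly
        -- the ideal (XU − F(X,Z,W)).
        ((ψT F₀).range =
          AlgHom.equalizer (τ : Tq F₀ →ₐ[ℂ] Tq F₀) (AlgHom.id ℂ (Tq F₀)) ∧
         RingHom.ker (ψT F₀) =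
          Ideal.span {X 0 * X 3 - rename Fin.castSucc F₀}) := by
  classical
  have hlam5 : lam ^ 5 = 1 := hlam.pow_eq_one
  have hlamne : lam ≠ 0 := hlam.ne_zero (by norm_num)
  have hinv5 : (lam⁻¹) ^ 5 = 1 := by rw [inv_pow, hlam5, inv_one]
  have hmk : mkT F₀ = Ideal.Quotient.mk (sexticIdeal F₀) := rfl
  have hg0 : Ideal.Quotient.mk (sexticIdeal F₀) (X 0 * X 1 ^ 5 - Fxyzw F₀) = 0 :=
    Ideal.Quotient.eq_zero_iff_mem.mpr (Ideal.subset_span rfl)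
  refine ⟨?_, ?_⟩
  · rw [sexticIdeal, Ideal.map_span, Set.image_singleton, scaleY_g F₀ lam hlam5]
  have hker : ∀ μ : ℂ, μ ^ 5 = 1 → ∀ a ∈ sexticIdeal F₀,
      ((Ideal.Quotient.mkₐ ℂ (sexticIdeal F₀)).comp (scaleY μ)) a = 0 := by
    intro μ hμ a ha
    rw [sexticIdeal, Ideal.mem_span_singleton] at ha
    obtain ⟨c, rfl⟩ := ha
    simp only [AlgHom.comp_apply, map_mul, scaleY_g F₀ μ hμ,
      Ideal.Quotient.mkₐ_eq_mk, hg0, zero_mul]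
  have hdmk : ∀ (μ : ℂ) (hμ : μ ^ 5 = 1) (r : MvPolynomial (Fin 4) ℂ),
      Ideal.Quotient.liftₐ (sexticIdeal F₀)
        ((Ideal.Quotient.mkₐ ℂ (sexticIdeal F₀)).comp (scaleY μ)) (hker μ hμ)
        (mkT F₀ r) = mkT F₀ (scaleY μ r) := by
    intro μ hμ r
    rw [hmk]
    simp [Ideal.Quotient.liftₐ_apply, Ideal.Quotient.lift_mk,
      Ideal.Quotient.mkₐ_eq_mk]
    rfl
  set d1 := Ideal.Quotient.liftₐ (sexticIdeal F₀)
    ((Ideal.Quotient.mkₐ ℂ (sexticIdeal F₀)).comp (scaleY lam)) (hker lam hlam5) with hd1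
  set d2 := Ideal.Quotient.liftₐ (sexticIdeal F₀)
    ((Ideal.Quotient.mkₐ ℂ (sexticIdeal F₀)).comp (scaleY lam⁻¹)) (hker lam⁻¹ hinv5) with hd2
  have hc1 : ∀ x, d1 (d2 x) = x := by
    intro x
    obtain ⟨r, rfl⟩ := Ideal.Quotient.mk_surjective x
    rw [← hmk, hdmk lam⁻¹ hinv5, hdmk lam hlam5, scaleY_scaleY,
      mul_inv_cancel₀ hlamne, scaleY_one]
  have hc2 : ∀ x, d2 (d1 x) = x := by
    intro x
    obtain ⟨r, rfl⟩ := Ideal.Quotient.mk_surjective x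
    rw [← hmk, hdmk lam hlam5, hdmk lam⁻¹ hinv5, scaleY_scaleY,
      inv_mul_cancel₀ hlamne, scaleY_one]
  refine ⟨AlgEquiv.ofAlgHom d1 d2 (AlgHom.ext hc1) (AlgHom.ext hc2),
    fun r => hdmk lam hlam5 r, ?_⟩
  intro τ hτ
  -- range of ψT is the adjoin
  have hrange : (ψT F₀).range = Algebra.adjoin ℂ
      {mkT F₀ (X 0), mkT F₀ (X 1) ^ 5, mkT F₀ (X 2), mkT F₀ (X 3)} := by
    rw [ψT, ← Algebra.adjoin_range_eq_range_aeval]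
    congr 1
    simp only [Matrix.range_cons, Matrix.range_empty, Set.union_empty]
    ext v
    simp only [Set.union_singleton, Set.mem_union, Set.mem_singleton_iff,
      Set.mem_insert_iff]
    tauto
  have heq : AlgHom.equalizer (τ : Tq F₀ →ₐ[ℂ] Tq F₀) (AlgHom.id ℂ (Tq F₀)) =
      Algebra.adjoin ℂ
        {mkT F₀ (X 0), mkT F₀ (X 1) ^ 5, mkT F₀ (X 2), mkT F₀ (X 3)} := by
    refine le_antisymm ?_ ?_
    · intro t ht
      rw [AlgHom.mem_equalizer] at ht
      simp only [AlgHom.coe_coe, AlgHom.coe_id, id_eq] at ht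
      obtain ⟨p, rfl⟩ := Ideal.Quotient.mk_surjective t
      rw [← hmk] at ht ⊢
      have hk : ∀ k : ℕ, mkT F₀ (scaleY (lam ^ k) p) = mkT F₀ p := by
        intro k
        induction k with
        | zero => rw [pow_zero, scaleY_one]
        | succ n ih =>
          calc mkT F₀ (scaleY (lam ^ (n + 1)) p)
              = mkT F₀ (scaleY lam (scaleY (lam ^ n) p)) := by
                rw [scaleY_scaleY, ← pow_succ']
            _ = τ (mkT F₀ (scaleY (lam ^ n) p)) := (hτ _).symm
            _ = τ (mkT F₀ p) := by rw [ih]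
            _ = mkT F₀ p := ht
      have hAv : mkT F₀ p = mkT F₀ (Av lam p) := by
        have hsm : mkT F₀ (Av lam p) =
            (5:ℂ)⁻¹ • ∑ k ∈ range 5, mkT F₀ (scaleY (lam ^ k) p) := by
          show Ideal.Quotient.mkₐ ℂ (sexticIdeal F₀) (Av lam p) = _
          rw [Av, map_smul, map_sum]
          rfl
        rw [hsm]
        simp only [hk, sum_const, card_range]
        rw [← Nat.cast_smul_eq_nsmul ℂ, smul_smul,
          show ((5:ℕ):ℂ) = (5:ℂ) from by norm_num,
          inv_mul_cancel₀ (by norm_num : (5:ℂ) ≠ 0), one_smul]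
      obtain ⟨q, hq⟩ := φm_range (Av lam p) (Av_support hlam p)
      have hψ : mkT F₀ (Av lam p) = ψT F₀ q := by
        rw [← hq, ψ_eq]
        rfl
      rw [hAv, hψ, ← hrange]
      exact ⟨q, rfl⟩
    · apply Algebra.adjoin_le
      intro v hv
      rw [SetLike.mem_coe, AlgHom.mem_equalizer]
      simp only [Set.mem_insert_iff, Set.mem_singleton_iff] at hv
      rcases hv with rfl | rfl | rfl | rfl
      · simp only [AlgHom.coe_coe, AlgHom.coe_id, id_eq]
        rw [AlgEquiv.coe_algHom, hτ, show scaleY lam (X 0) = X 0 by simp [scaleY]]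
      · simp only [AlgHom.coe_coe, AlgHom.coe_id, id_eq]
        rw [AlgEquiv.coe_algHom, map_pow, hτ, show scaleY lam (X 1) = C lam * X 1 by simp [scaleY], hmk,
          ← map_pow, ← map_pow, mul_pow, ← C_pow, hlam5, C_1, one_mul]
      · simp only [AlgHom.coe_coe, AlgHom.coe_id, id_eq]
        rw [AlgEquiv.coe_algHom, hτ, show scaleY lam (X 2) = X 2 by simp [scaleY]]
      · simp only [AlgHom.coe_coe, AlgHom.coe_id, id_eq]
        rw [AlgEquiv.coe_algHom, hτ, show scaleY lam (X 3) = X 3 by simp [scaleY]]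
  refine ⟨heq, hrange.trans heq.symm, ?_⟩
  -- kernel computation
  refine le_antisymm ?_ ?_
  · intro p hp
    rw [RingHom.mem_ker] at hp
    have h0 : Ideal.Quotient.mk (sexticIdeal F₀) (φm p) = 0 := by
      have := DFunLike.congr_fun (ψ_eq F₀) p
      rw [hp] at this
      exact this.symm
    have hI : φm p ∈ sexticIdeal F₀ := Ideal.Quotient.eq_zero_iff_mem.mp h0
    rw [sexticIdeal, Ideal.mem_span_singleton] at hI
    obtain ⟨h, hh⟩ := hI
    have hk : ∀ k : ℕ, φm p = (X 0 * X 1 ^ 5 - Fxyzw F₀) * scaleY (lam ^ k) h := by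
      intro k
      have h5 : (lam ^ k) ^ 5 = 1 := by rw [pow_right_comm, hlam5, one_pow]
      calc φm p = scaleY (lam ^ k) (φm p) := (scaleY_φm (lam ^ k) h5 p).symm
        _ = scaleY (lam ^ k) ((X 0 * X 1 ^ 5 - Fxyzw F₀) * h) := by rw [hh]
        _ = (X 0 * X 1 ^ 5 - Fxyzw F₀) * scaleY (lam ^ k) h := by
            rw [map_mul, scaleY_g F₀ _ h5]
    have hav : φm p = (X 0 * X 1 ^ 5 - Fxyzw F₀) * Av lam h := by
      have hs : (5:ℕ) • φm p =
          (X 0 * X 1 ^ 5 - Fxyzw F₀) * ∑ k ∈ range 5, scaleY (lam ^ k) h := by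
        rw [mul_sum]
        calc (5:ℕ) • φm p = ∑ _k ∈ range 5, φm p := by rw [sum_const, card_range]
          _ = _ := sum_congr rfl fun k _ => hk k
      rw [Av, mul_smul_comm, ← hs, ← Nat.cast_smul_eq_nsmul ℂ, smul_smul,
        show ((5:ℕ):ℂ) = (5:ℂ) from by norm_num,
        inv_mul_cancel₀ (by norm_num : (5:ℂ) ≠ 0), one_smul]
    obtain ⟨h'', hq⟩ := φm_range (Av lam h) (Av_support hlam h)
    have hfin : φm p = φm ((X 0 * X 3 - rename Fin.castSucc F₀) * h'') := by
      rw [map_mul, φm_G, hq, hav]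
    rw [Ideal.mem_span_singleton]
    exact ⟨h'', φm_inj hfin⟩
  · rw [Ideal.span_le]
    intro x hx
    rw [Set.mem_singleton_iff] at hx
    subst hx
    rw [SetLike.mem_coe, RingHom.mem_ker, ψ_eq]
    show Ideal.Quotient.mkₐ ℂ (sexticIdeal F₀) (φm (X 0 * X 3 - rename Fin.castSucc F₀)) = 0
    rw [φm_G, Ideal.Quotient.mkₐ_eq_mk, hg0]
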